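/- For a basic CFSM M, the translation round-trip preserves trace semantics: M is trace equivalent to the CFSM obtained from its induced local type, i.e., M ≈ A(T(M)); and for any local type T, T ≈ A(T). -/

import Mathlib

/-- Actions: `send p q a` = pq!a, `recv p q a` = pq?a. -/
inductive Act (P A : Type) : Type
  | send (p q : P) (a : A)
  | recv (p q : P) (a : A)

namespace Act
variable {P A : Type}
def subj : Act P A → P
  | send p _ _ => p
  | recv _ q _ => q
def partner : Act P A → P
  | send _ q _ => q
  | recv p _ _ => p
def isSend : Act P A → Bool
  | send _ _ _ => true
  | recv _ _ _ => false
def msg : Act P A → A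
  | send _ _ a => a
  | recv _ _ a => a
end Act

/-- Local session types with named recursion variables. -/
inductive LTn (P A : Type) : Type
  | ende : LTn P A
  | var (x : ℕ) : LTn P A
  | mu (x : ℕ) (T : LTn P A) : LTn P A
  | recvT (p : P) (bs : List (A × LTn P A)) : LTn P A
  | sendT (p : P) (bs : List (A × LTn P A)) : LTn P A

namespace LTn
variable {P A : Type}
mutual
  def subst (x : ℕ) (u : LTn P A) : LTn P A → LTn P A
    | .ende => .ende
    | .var y => if y = x then u else .var y
    | .mu y T => if y = x then .mu y T else .mu y (subst x u T)
    | .recvT p bs => .recvT p (substL x u bs)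
    | .sendT p bs => .sendT p (substL x u bs)
  def substL (x : ℕ) (u : LTn P A) :
      List (A × LTn P A) → List (A × LTn P A)
    | [] => []
    | (a, T) :: bs => (a, subst x u T) :: substL x u bs
end
end LTn

/-- LTS over local types of role `self` (LR1-LR3). -/
inductive LStep {P A : Type} (self : P) : LTn P A → Act P A → LTn P A → Prop
  | sel {p a T bs} : (a, T) ∈ bs →
      LStep self (.sendT p bs) (.send self p a) T
  | bra {p a T bs} : (a, T) ∈ bs →
      LStep self (.recvT p bs) (.recv p self a) T
  | mu {x T ℓ T'} : LStep self (LTn.subst x (.mu x T) T) ℓ T' →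
      LStep self (.mu x T) ℓ T'

/-- Multi-step relation of the local type LTS. -/
inductive LSteps {P A : Type} (self : P) :
    LTn P A → List (Act P A) → LTn P A → Prop
  | nil {T} : LSteps self T [] T
  | cons {T T' T'' ℓ ℓs} : LStep self T ℓ T' → LSteps self T' ℓs T'' →
      LSteps self T (ℓ :: ℓs) T''

/-- The traces of a local type. -/
def LTraces {P A : Type} (self : P) (T : LTn P A) : Set (List (Act P A)) :=
  {φ | ∃ T', LSteps self T φ T'}

/-- An abstract finite-state machine (automaton over actions). -/
structure Machine (σ P A : Type) where
  init : σ
  delta : σ → Act P A → σ → Prop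

inductive MSteps {σ P A : Type} (M : Machine σ P A) :
    σ → List (Act P A) → σ → Prop
  | nil {s} : MSteps M s [] s
  | cons {s s' s'' ℓ ℓs} : M.delta s ℓ s' → MSteps M s' ℓs s'' →
      MSteps M s (ℓ :: ℓs) s''

/-- The (finite action) traces of a machine. -/
def MTraces {σ P A : Type} (M : Machine σ P A) : Set (List (Act P A)) :=
  {φ | ∃ s, MSteps M M.init φ s}

/-- A(T): the CFSM translated from a local type T, whose states are the
(unfoldings of) subterm occurrences of T and whose transitions are given
by the local type LTS. -/
def AT {P A : Type} (self : P) (T : LTn P A) : Machine (LTn P A) P A :=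
  ⟨T, LStep self⟩

/-- A concrete CFSM for a single participant: states are natural numbers,
transitions a finite list. -/
structure FSM (P A : Type) where
  init : ℕ
  trans : List (ℕ × Act P A × ℕ)

namespace FSM
variable {P A : Type}

def toMachine (M : FSM P A) : Machine ℕ P A :=
  ⟨M.init, fun s ℓ s' => (s, ℓ, s') ∈ M.trans⟩

def states (M : FSM P A) : List ℕ :=
  M.init :: M.trans.foldr (fun t acc => t.1 :: t.2.2 :: acc) []

/-- The outgoing transitions of state `q`. -/
def out (M : FSM P A) (q : ℕ) : List (Act P A × ℕ) :=
  M.trans.filterMap (fun t => if t.1 = q then some t.2 else none)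

/-- Machine `M` belongs to participant `p`. -/
def Proper (M : FSM P A) (p : P) : Prop :=
  ∀ t ∈ M.trans, Act.subj t.2.1 = p

def Deterministic (M : FSM P A) : Prop :=
  ∀ q ℓ q1 q2, (q, ℓ, q1) ∈ M.trans → (q, ℓ, q2) ∈ M.trans → q1 = q2

def DirectedM (M : FSM P A) : Prop :=
  ∀ q ℓ1 q1 ℓ2 q2, (q, ℓ1, q1) ∈ M.trans → (q, ℓ2, q2) ∈ M.trans →
    Act.partner ℓ1 = Act.partner ℓ2

def NoMixed (M : FSM P A) : Prop :=
  ∀ q ℓ1 q1 ℓ2 q2, (q, ℓ1, q1) ∈ M.trans → (q, ℓ2, q2) ∈ M.trans →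
    Act.isSend ℓ1 = Act.isSend ℓ2

/-- A basic CFSM: deterministic, directed, no mixed states. -/
def Basic (M : FSM P A) (p : P) : Prop :=
  Proper M p ∧ Deterministic M ∧ DirectedM M ∧ NoMixed M

end FSM

/-- T(M): the translation of a basic CFSM into a local type. Sending states
become selections, receiving states branchings, final states `end`, and
back-edges to already visited states become recursion variables (each state
`q` names a recursion binder μt_q). The fuel (bounded by the number of
states) guarantees termination. -/
def TMgo {P A : Type} (M : FSM P A) : ℕ → List ℕ → ℕ → LTn P A
  | 0, _, _ => .ende
  | fuel + 1, visited, q =>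
    match M.out q with
    | [] => .ende
    | (ℓ, _) :: _ =>
      let bs := (M.out q).map (fun o =>
        (Act.msg o.1,
          if o.2 ∈ q :: visited then LTn.var o.2
          else TMgo M fuel (q :: visited) o.2))
      if Act.isSend ℓ then .mu q (.sendT (Act.partner ℓ) bs)
      else .mu q (.recvT (Act.partner ℓ) bs)

def TM {P A : Type} (M : FSM P A) : LTn P A :=
  TMgo M (M.states.length + 1) [] M.init

namespace LTn
variable {P A : Type}
mutual
  def NF (x : ℕ) : LTn P A → Prop
    | .ende => True
    | .var y => y ≠ x
    | .mu y T => y = x ∨ NF x T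
    | .recvT _ bs => NFL x bs
    | .sendT _ bs => NFL x bs
  def NFL (x : ℕ) : List (A × LTn P A) → Prop
    | [] => True
    | (_, T) :: bs => NF x T ∧ NFL x bs
end

mutual
  def NM (y : ℕ) : LTn P A → Prop
    | .ende => True
    | .var _ => True
    | .mu z T => z ≠ y ∧ NM y T
    | .recvT _ bs => NML y bs
    | .sendT _ bs => NML y bs
  def NML (y : ℕ) : List (A × LTn P A) → Prop
    | [] => True
    | (_, T) :: bs => NM y T ∧ NML y bs
end

mutual
theorem subst_nf (x : ℕ) (u : LTn P A) : ∀ T, NF x T → subst x u T = T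
  | .ende, _ => rfl
  | .var y, h => by
      simp only [NF] at h; simp [subst, h]
  | .mu y T, h => by
      simp only [NF] at h
      rcases h with h | h
      · simp [subst, h]
      · by_cases hyx : y = x
        · simp [subst, hyx]
        · simp [subst, hyx, subst_nf x u T h]
  | .recvT r bs, h => by
      simp only [NF] at h; simp [subst, substL_nf x u bs h]
  | .sendT r bs, h => by
      simp only [NF] at h; simp [subst, substL_nf x u bs h]
theorem substL_nf (x : ℕ) (u : LTn P A) :
    ∀ bs, NFL x bs → substL x u bs = bs
  | [], _ => rfl
  | (a, T) :: bs, h => by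
      simp only [NFL] at h
      simp [substL, subst_nf x u T h.1, substL_nf x u bs h.2]
end

theorem substL_eq_map (x : ℕ) (u : LTn P A) :
    ∀ bs, substL x u bs = bs.map (fun b => (b.1, subst x u b.2))
  | [] => rfl
  | (a, T) :: bs => by simp [substL, substL_eq_map x u bs]


mutual
theorem nm_subst (y x : ℕ) (u : LTn P A) :
    ∀ T, NM y T → NM y u → NM y (subst x u T)
  | .ende, _, _ => trivial
  | .var z, _, hu => by
      by_cases hzx : z = x <;> simp [subst, hzx, NM, hu]
  | .mu z T, h, hu => by
      simp only [NM] at h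
      by_cases hzx : z = x
      · simpa [subst, hzx, NM] using h
      · simp only [subst, hzx, if_neg, NM]
        exact ⟨h.1, nm_subst y x u T h.2 hu⟩
  | .recvT r bs, h, hu => by
      simp only [NM] at h
      simp only [subst, NM]
      exact nml_subst y x u bs h hu
  | .sendT r bs, h, hu => by
      simp only [NM] at h
      simp only [subst, NM]
      exact nml_subst y x u bs h hu
theorem nml_subst (y x : ℕ) (u : LTn P A) :
    ∀ bs, NML y bs → NM y u → NML y (substL x u bs)
  | [], _, _ => trivial
  | (a, T) :: bs, h, hu => by
      simp only [NML] at h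
      simp only [substL, NML]
      exact ⟨nm_subst y x u T h.1 hu, nml_subst y x u bs h.2 hu⟩
end

mutual
theorem subst_comm {x y : ℕ} (N M : LTn P A) (hxy : x ≠ y) (hN : NF x N) :
    ∀ T, NM y T →
      subst y N (subst x M T) = subst x (subst y N M) (subst y N T)
  | .ende, _ => rfl
  | .var z, _ => by
      by_cases hzx : z = x
      · have hzy : ¬ z = y := by rw [hzx]; exact hxy
        simp [subst, hzx, hzy, hxy, Ne.symm hxy]
      · by_cases hzy : z = y
        · simp [subst, hzx, hzy, hxy, Ne.symm hxy, subst_nf x (subst y N M) N hN]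
        · simp [subst, hzx, hzy]
  | .mu z T, h => by
      simp only [NM] at h
      by_cases hzx : z = x
      · have hzy : ¬ z = y := by rw [hzx]; exact hxy
        simp [subst, hzx, hzy, hxy, Ne.symm hxy]
      · simp [subst, hzx, h.1, subst_comm N M hxy hN T h.2]
  | .recvT r bs, h => by
      simp only [NM] at h
      simp [subst, substL_comm N M hxy hN bs h]
  | .sendT r bs, h => by
      simp only [NM] at h
      simp [subst, substL_comm N M hxy hN bs h]
theorem substL_comm {x y : ℕ} (N M : LTn P A) (hxy : x ≠ y) (hN : NF x N) :
    ∀ bs, NML y bs →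
      substL y N (substL x M bs) = substL x (subst y N M) (substL y N bs)
  | [], _ => rfl
  | (a, T) :: bs, h => by
      simp only [NML] at h
      simp [substL, subst_comm N M hxy hN T h.1, substL_comm N M hxy hN bs h.2]
end

end LTn
section AuxDev
variable {P A : Type}

open LTn

theorem out_mem {M : FSM P A} {q : ℕ} {ℓ : Act P A} {q' : ℕ} :
    (ℓ, q') ∈ M.out q ↔ (q, ℓ, q') ∈ M.trans := by
  simp only [FSM.out, List.mem_filterMap]
  constructor
  · rintro ⟨⟨a, b, c⟩, ht, h⟩
    by_cases hb : a = q <;> simp [hb] at h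
    rcases h with ⟨h1, h2⟩; subst h1; subst h2; rwa [← hb]
  · intro h; exact ⟨(q, ℓ, q'), h, by simp⟩

theorem mem_states_of_trans {M : FSM P A} {t : ℕ × Act P A × ℕ}
    (h : t ∈ M.trans) : t.1 ∈ M.states ∧ t.2.2 ∈ M.states := by
  have : ∀ L : List (ℕ × Act P A × ℕ), t ∈ L →
      t.1 ∈ L.foldr (fun t acc => t.1 :: t.2.2 :: acc) [] ∧
      t.2.2 ∈ L.foldr (fun t acc => t.1 :: t.2.2 :: acc) [] := by
    intro L
    induction L with
    | nil => intro h; simp at h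
    | cons a L ih =>
      intro h
      rcases List.mem_cons.1 h with h | h
      · subst h; simp
      · rcases ih h with ⟨h1, h2⟩
        constructor <;> simp [h1, h2]
  rcases this M.trans h with ⟨h1, h2⟩
  exact ⟨List.mem_cons_of_mem _ h1, List.mem_cons_of_mem _ h2⟩

theorem init_mem_states (M : FSM P A) : M.init ∈ M.states :=
  List.mem_cons_self

theorem tmgo_nil {M : FSM P A} {q : ℕ} (f : ℕ) (V : List ℕ)
    (h : M.out q = []) : TMgo M (f + 1) V q = .ende := by
  simp only [TMgo, h]

theorem tmgo_cons {M : FSM P A} {q : ℕ} {ℓ : Act P A} {r : ℕ}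
    {rest : List (Act P A × ℕ)} (f : ℕ) (V : List ℕ)
    (h : M.out q = (ℓ, r) :: rest) :
    TMgo M (f + 1) V q =
      (if Act.isSend ℓ then
        LTn.mu q (.sendT (Act.partner ℓ) ((M.out q).map (fun o =>
          (Act.msg o.1, if o.2 ∈ q :: V then LTn.var o.2
            else TMgo M f (q :: V) o.2))))
      else
        LTn.mu q (.recvT (Act.partner ℓ) ((M.out q).map (fun o =>
          (Act.msg o.1, if o.2 ∈ q :: V then LTn.var o.2
            else TMgo M f (q :: V) o.2))))) := by
  conv_lhs => simp only [TMgo, h]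
  rw [h]

theorem tmgo_nf (M : FSM P A) :
    ∀ (f : ℕ) (V : List ℕ) (q x : ℕ), x ∉ V → NF x (TMgo M f V q) := by
  intro f
  induction f with
  | zero => intro V q x _; simp only [TMgo]; trivial
  | succ f ih =>
    intro V q x hxV
    rcases h : M.out q with _ | ⟨⟨ℓ, r⟩, rest⟩
    · rw [tmgo_nil f V h]; trivial
    · rw [tmgo_cons f V h]
      by_cases hxq : x = q
      · split <;> · simp only [NF]; exact Or.inl hxq.symm
      · have key : ∀ L : List (Act P A × ℕ),
            NFL x (L.map (fun o =>
              (Act.msg o.1, if o.2 ∈ q :: V then LTn.var o.2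
                else TMgo M f (q :: V) o.2))) := by
          intro L
          induction L with
          | nil => trivial
          | cons o L ihL =>
            refine ⟨?_, ihL⟩
            by_cases hm : o.2 ∈ q :: V
            · simp only [hm, if_true]
              show o.2 ≠ x
              intro hc; subst hc
              rcases List.mem_cons.1 hm with h1 | h1
              · exact hxq h1
              · exact hxV h1
            · simp only [hm, if_false]
              exact ih (q :: V) o.2 x (by
                intro hc
                rcases List.mem_cons.1 hc with h1 | h1
                · exact hxq h1
                · exact hxV h1)
        split <;>
        · simp only [NF]
          exact Or.inr (key _)

theorem tmgo_nm (M : FSM P A) :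
    ∀ (f : ℕ) (V : List ℕ) (q y : ℕ), y ∈ V → y ≠ q → NM y (TMgo M f V q) := by
  intro f
  induction f with
  | zero => intro V q y _ _; simp only [TMgo]; trivial
  | succ f ih =>
    intro V q y hyV hyq
    rcases h : M.out q with _ | ⟨⟨ℓ, r⟩, rest⟩
    · rw [tmgo_nil f V h]; trivial
    · rw [tmgo_cons f V h]
      have key : ∀ L : List (Act P A × ℕ),
          NML y (L.map (fun o =>
            (Act.msg o.1, if o.2 ∈ q :: V then LTn.var o.2
              else TMgo M f (q :: V) o.2))) := by
        intro L
        induction L with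
        | nil => trivial
        | cons o L ihL =>
          refine ⟨?_, ihL⟩
          by_cases hm : o.2 ∈ q :: V
          · simp only [hm, if_true]; trivial
          · simp only [hm, if_false]
            exact ih (q :: V) o.2 y (List.mem_cons_of_mem _ hyV)
              (fun hc => hm (hc ▸ List.mem_cons_of_mem _ hyV))
      split <;> · simp only [NM]; exact ⟨Ne.symm hyq, key _⟩

end AuxDev
section AuxDev2
variable {P A : Type}

open LTn

def DD (M : FSM P A) (V : List ℕ) (q : ℕ) : LTn P A :=
  TMgo M (M.states.length + 1 - V.length) V q

def applyC (M : FSM P A) : List ℕ → LTn P A → LTn P A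
  | [], T => T
  | v :: V, T => applyC M V (LTn.subst v (DD M V v) T)

def Conf (M : FSM P A) (C : List ℕ) (q : ℕ) : LTn P A := applyC M C (DD M C q)

inductive Chain (M : FSM P A) : List ℕ → Prop
  | nil : Chain M []
  | cons {v : ℕ} {V : List ℕ} : v ∈ M.states → v ∉ V → Chain M V →
      Chain M (v :: V)

theorem chain_sub {M : FSM P A} {C : List ℕ} (h : Chain M C) :
    C.Nodup ∧ C ⊆ M.states := by
  induction h with
  | nil => exact ⟨List.nodup_nil, by simp⟩
  | cons hv hnv _ ih =>
    exact ⟨List.nodup_cons.2 ⟨hnv, ih.1⟩, List.cons_subset.2 ⟨hv, ih.2⟩⟩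

theorem chain_length {M : FSM P A} {C : List ℕ} (h : Chain M C) :
    C.length ≤ M.states.length :=
  (List.subperm_of_subset (chain_sub h).1 (chain_sub h).2).length_le

theorem applyC_ende (M : FSM P A) : ∀ C : List ℕ, applyC M C .ende = .ende
  | [] => rfl
  | v :: V => by simp only [applyC, subst]; exact applyC_ende M V

theorem applyC_mu (M : FSM P A) {q : ℕ} :
    ∀ (C : List ℕ), q ∉ C → ∀ T : LTn P A,
      applyC M C (.mu q T) = .mu q (applyC M C T)
  | [], _, T => rfl
  | v :: V, h, T => by
    have hqv : ¬ q = v := fun hc => h (hc ▸ List.mem_cons_self)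
    simp only [applyC, subst, hqv, if_neg]
    exact applyC_mu M V (fun hc => h (List.mem_cons_of_mem _ hc)) _

theorem applyC_sendT (M : FSM P A) :
    ∀ (C : List ℕ) (r : P) (bs : List (A × LTn P A)),
      applyC M C (.sendT r bs) = .sendT r (bs.map fun b => (b.1, applyC M C b.2))
  | [], r, bs => by simp [applyC]
  | v :: V, r, bs => by
    simp only [applyC, subst, substL_eq_map, applyC_sendT M V, List.map_map]
    rfl

theorem applyC_recvT (M : FSM P A) :
    ∀ (C : List ℕ) (r : P) (bs : List (A × LTn P A)),
      applyC M C (.recvT r bs) = .recvT r (bs.map fun b => (b.1, applyC M C b.2))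
  | [], r, bs => by simp [applyC]
  | v :: V, r, bs => by
    simp only [applyC, subst, substL_eq_map, applyC_recvT M V, List.map_map]
    rfl

theorem applyC_var_mem (M : FSM P A) :
    ∀ (C : List ℕ), Chain M C → ∀ s ∈ C,
      ∃ C', Chain M (s :: C') ∧ applyC M C (.var s) = Conf M C' s := by
  intro C
  induction C with
  | nil => intro _ s hs; simp at hs
  | cons v V ih =>
    intro hC s hs
    cases hC with
    | cons hv hnv hch =>
      by_cases hsv : s = v
      · subst hsv
        refine ⟨V, Chain.cons hv hnv hch, ?_⟩
        simp [applyC, subst, Conf]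
      · have hsV : s ∈ V := by
          rcases List.mem_cons.1 hs with h | h
          · exact absurd h hsv
          · exact h
        rcases ih hch s hsV with ⟨C', h1, h2⟩
        refine ⟨C', h1, ?_⟩
        simp only [applyC, subst, hsv, if_neg]
        exact h2

theorem applyC_subst (M : FSM P A) {q : ℕ} :
    ∀ (C : List ℕ), Chain M C → q ∉ C →
      ∀ (Mt T : LTn P A), (∀ v ∈ C, NM v T) → (∀ v ∈ C, NM v Mt) →
      applyC M C (subst q Mt T) = subst q (applyC M C Mt) (applyC M C T) := by
  intro C
  induction C with
  | nil => intro _ _ Mt T _ _; rfl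
  | cons v V ih =>
    intro hC hq Mt T hT hMt
    cases hC with
    | cons hv hnv hch =>
      have hqv : q ≠ v := fun hc => hq (hc ▸ List.mem_cons_self)
      have hqV : q ∉ V := fun hc => hq (List.mem_cons_of_mem _ hc)
      have hNF : NF q (DD M V v) := tmgo_nf M _ V v q hqV
      simp only [applyC]
      rw [subst_comm (DD M V v) Mt hqv hNF T (hT v (List.mem_cons_self))]
      exact ih hch hqV _ _
        (fun v' hv' => nm_subst v' v (DD M V v) T
          (hT v' (List.mem_cons_of_mem _ hv'))
          (tmgo_nm M _ V v v' hv' (fun hc => hnv (hc ▸ hv'))))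
        (fun v' hv' => nm_subst v' v (DD M V v) Mt
          (hMt v' (List.mem_cons_of_mem _ hv'))
          (tmgo_nm M _ V v v' hv' (fun hc => hnv (hc ▸ hv'))))

theorem conf_nil {M : FSM P A} {q : ℕ} {C : List ℕ}
    (hC : Chain M (q :: C)) (h : M.out q = []) : Conf M C q = .ende := by
  have hlen : C.length + 1 ≤ M.states.length := by
    simpa using chain_length hC
  obtain ⟨f, hf⟩ : ∃ f, M.states.length + 1 - C.length = f + 1 :=
    ⟨M.states.length - C.length, by omega⟩
  unfold Conf DD
  rw [hf, tmgo_nil _ _ h, applyC_ende]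

theorem conf_shape {M : FSM P A} {q : ℕ} {C : List ℕ} {ℓ0 : Act P A}
    {r0 : ℕ} {rest : List (Act P A × ℕ)}
    (hC : Chain M (q :: C)) (h : M.out q = (ℓ0, r0) :: rest) :
    ∃ B : LTn P A, Conf M C q = .mu q B ∧
      LTn.subst q (.mu q B) B =
        (if Act.isSend ℓ0 then
          LTn.sendT (Act.partner ℓ0) ((M.out q).map (fun o =>
            (Act.msg o.1, applyC M (q :: C)
              (if o.2 ∈ q :: C then LTn.var o.2 else DD M (q :: C) o.2))))
        else
          LTn.recvT (Act.partner ℓ0) ((M.out q).map (fun o =>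
            (Act.msg o.1, applyC M (q :: C)
              (if o.2 ∈ q :: C then LTn.var o.2 else DD M (q :: C) o.2))))) := by
  cases hC with
  | cons hqs hqC hch =>
  have hlen : C.length + 1 ≤ M.states.length := by
    simpa using chain_length (Chain.cons hqs hqC hch)
  have hfuel : M.states.length + 1 - C.length = (M.states.length - C.length) + 1 := by
    omega
  have hfuel2 : M.states.length - C.length =
      M.states.length + 1 - (q :: C).length := by
    simp only [List.length_cons]; omega
  have hDD : DD M C q = TMgo M ((M.states.length - C.length) + 1) C q := by
    unfold DD; rw [hfuel]
  have hbody : ∀ o : Act P A × ℕ,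
      (if o.2 ∈ q :: C then LTn.var o.2
        else TMgo M (M.states.length - C.length) (q :: C) o.2) =
      (if o.2 ∈ q :: C then LTn.var o.2 else DD M (q :: C) o.2) := by
    intro o; unfold DD; rw [hfuel2]
  rw [tmgo_cons _ _ h] at hDD
  -- abbreviation for the raw branch list
  set bs0 := (M.out q).map (fun o =>
    (Act.msg o.1, if o.2 ∈ q :: C then LTn.var o.2 else DD M (q :: C) o.2)) with hbs0
  have hbs0' : (M.out q).map (fun o =>
      (Act.msg o.1, if o.2 ∈ q :: C then LTn.var o.2
        else TMgo M (M.states.length - C.length) (q :: C) o.2)) = bs0 := by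
    rw [hbs0]; apply List.map_congr_left; intro o _; rw [hbody o]
  rw [hbs0'] at hDD
  have hNMDD : ∀ v ∈ C, NM v (DD M C q) := by
    intro v hv
    exact tmgo_nm M _ C q v hv (fun hc => hqC (hc ▸ hv))
  by_cases hs : Act.isSend ℓ0 = true
  · rw [if_pos hs] at hDD
    refine ⟨applyC M C (.sendT (Act.partner ℓ0) bs0), ?_, ?_⟩
    · show applyC M C (DD M C q) = _
      rw [hDD, applyC_mu M C hqC]
    · have hNMbody : ∀ v ∈ C, NM v (LTn.sendT (Act.partner ℓ0) bs0) := by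
        intro v hv
        have := hNMDD v hv
        rw [hDD] at this
        simp only [NM] at this
        exact this.2
      have key : LTn.subst q (.mu q (applyC M C (.sendT (Act.partner ℓ0) bs0)))
          (applyC M C (.sendT (Act.partner ℓ0) bs0)) =
          applyC M C (LTn.subst q (DD M C q) (.sendT (Act.partner ℓ0) bs0)) := by
        rw [applyC_subst M C hch hqC (DD M C q) _ hNMbody hNMDD,
          ← applyC_mu M C hqC, ← hDD]
      rw [key, if_pos hs]
      simp only [subst, substL_eq_map, hbs0, List.map_map, applyC_sendT]
      exact congrArg _ (List.map_congr_left (fun o _ => rfl))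
  · rw [if_neg hs] at hDD
    refine ⟨applyC M C (.recvT (Act.partner ℓ0) bs0), ?_, ?_⟩
    · show applyC M C (DD M C q) = _
      rw [hDD, applyC_mu M C hqC]
    · have hNMbody : ∀ v ∈ C, NM v (LTn.recvT (Act.partner ℓ0) bs0) := by
        intro v hv
        have := hNMDD v hv
        rw [hDD] at this
        simp only [NM] at this
        exact this.2
      have key : LTn.subst q (.mu q (applyC M C (.recvT (Act.partner ℓ0) bs0)))
          (applyC M C (.recvT (Act.partner ℓ0) bs0)) =
          applyC M C (LTn.subst q (DD M C q) (.recvT (Act.partner ℓ0) bs0)) := by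
        rw [applyC_subst M C hch hqC (DD M C q) _ hNMbody hNMDD,
          ← applyC_mu M C hqC, ← hDD]
      rw [key, if_neg hs]
      simp only [subst, substL_eq_map, hbs0, List.map_map, applyC_recvT]
      exact congrArg _ (List.map_congr_left (fun o _ => rfl))

end AuxDev2
section AuxDev3
variable {P A : Type}

open LTn

theorem label_eq {M : FSM P A} {p : P} (hB : FSM.Basic M p)
    {q : ℕ} {ℓ : Act P A} {q' : ℕ} {ℓ0 : Act P A} {r0 : ℕ}
    (ht : (q, ℓ, q') ∈ M.trans) (h0 : (q, ℓ0, r0) ∈ M.trans) :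
    ℓ = (if Act.isSend ℓ0 then Act.send p (Act.partner ℓ0) (Act.msg ℓ)
        else Act.recv (Act.partner ℓ0) p (Act.msg ℓ)) := by
  obtain ⟨hP, _hDet, hDir, hNM⟩ := hB
  have hsubj : Act.subj ℓ = p := hP (q, ℓ, q') ht
  have hpart : Act.partner ℓ = Act.partner ℓ0 := hDir q ℓ q' ℓ0 r0 ht h0
  have hsend : Act.isSend ℓ = Act.isSend ℓ0 := hNM q ℓ q' ℓ0 r0 ht h0
  cases ℓ with
  | send a b m =>
    have : Act.isSend ℓ0 = true := by rw [← hsend]; rfl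
    rw [if_pos this]
    simp only [Act.subj] at hsubj
    simp only [Act.partner] at hpart
    simp only [Act.msg]
    rw [hsubj, hpart]
    rfl
  | recv a b m =>
    have : ¬ Act.isSend ℓ0 = true := by
      rw [← hsend]; simp [Act.isSend]
    rw [if_neg this]
    simp only [Act.subj] at hsubj
    simp only [Act.partner] at hpart
    simp only [Act.msg]
    rw [hsubj, hpart]
    rfl

theorem next_conf {M : FSM P A} {q : ℕ} {C : List ℕ} {q' : ℕ}
    (hC : Chain M (q :: C)) (hq' : q' ∈ M.states) :
    ∃ C', Chain M (q' :: C') ∧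
      applyC M (q :: C) (if q' ∈ q :: C then LTn.var q' else DD M (q :: C) q') =
        Conf M C' q' := by
  by_cases hmem : q' ∈ q :: C
  · rw [if_pos hmem]
    rcases applyC_var_mem M (q :: C) hC q' hmem with ⟨C', h1, h2⟩
    exact ⟨C', h1, h2⟩
  · rw [if_neg hmem]
    exact ⟨q :: C, Chain.cons hq' hmem hC, rfl⟩

theorem step_forward {M : FSM P A} {p : P} (hB : FSM.Basic M p)
    {q : ℕ} {C : List ℕ} {ℓ : Act P A} {q' : ℕ}
    (hC : Chain M (q :: C)) (ht : (q, ℓ, q') ∈ M.trans) :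
    ∃ C', Chain M (q' :: C') ∧ LStep p (Conf M C q) ℓ (Conf M C' q') := by
  have hout : (ℓ, q') ∈ M.out q := out_mem.2 ht
  rcases hh : M.out q with _ | ⟨⟨ℓ0, r0⟩, rest⟩
  · rw [hh] at hout; simp at hout
  · have h0 : (q, ℓ0, r0) ∈ M.trans := out_mem.1 (hh ▸ List.mem_cons_self)
    rcases conf_shape hC hh with ⟨B, hB1, hB2⟩
    rcases next_conf hC (mem_states_of_trans ht).2 with ⟨C', hC', hconf⟩
    refine ⟨C', hC', ?_⟩
    rw [hB1]
    apply LStep.mu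
    rw [hB2]
    have hl := label_eq hB ht h0
    by_cases hs : Act.isSend ℓ0 = true
    · rw [if_pos hs]
      rw [if_pos hs] at hl
      rw [hl]
      apply LStep.sel
      exact List.mem_map.2 ⟨(ℓ, q'), hout, by rw [hconf]⟩
    · rw [if_neg hs]
      rw [if_neg hs] at hl
      rw [hl]
      apply LStep.bra
      exact List.mem_map.2 ⟨(ℓ, q'), hout, by rw [hconf]⟩

theorem step_backward {M : FSM P A} {p : P} (hB : FSM.Basic M p)
    {q : ℕ} {C : List ℕ} {ℓ : Act P A} {T'' : LTn P A}
    (hC : Chain M (q :: C)) (hstep : LStep p (Conf M C q) ℓ T'') :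
    ∃ q' C', (q, ℓ, q') ∈ M.trans ∧ Chain M (q' :: C') ∧ T'' = Conf M C' q' := by
  rcases hh : M.out q with _ | ⟨⟨ℓ0, r0⟩, rest⟩
  · rw [conf_nil hC hh] at hstep
    cases hstep
  · rcases conf_shape hC hh with ⟨B, hB1, hB2⟩
    have h0 : (q, ℓ0, r0) ∈ M.trans := out_mem.1 (hh ▸ List.mem_cons_self)
    rw [hB1] at hstep
    cases hstep with
    | mu hstep' =>
    rw [hB2] at hstep'
    by_cases hs : Act.isSend ℓ0 = true
    · rw [if_pos hs] at hstep'
      cases hstep' with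
      | sel hmem =>
        rcases List.mem_map.1 hmem with ⟨⟨ℓ', q'⟩, ho, heq⟩
        have ht' : (q, ℓ', q') ∈ M.trans := out_mem.1 ho
        injection heq with ha hT
        rcases next_conf hC (mem_states_of_trans ht').2 with ⟨C', hC', hconf⟩
        refine ⟨q', C', ?_, hC', by rw [← hT, hconf]⟩
        have hl := label_eq hB ht' h0
        rw [if_pos hs] at hl
        rw [ha] at hl
        rwa [hl] at ht'
    · rw [if_neg hs] at hstep'
      cases hstep' with
      | bra hmem =>
        rcases List.mem_map.1 hmem with ⟨⟨ℓ', q'⟩, ho, heq⟩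
        have ht' : (q, ℓ', q') ∈ M.trans := out_mem.1 ho
        injection heq with ha hT
        rcases next_conf hC (mem_states_of_trans ht').2 with ⟨C', hC', hconf⟩
        refine ⟨q', C', ?_, hC', by rw [← hT, hconf]⟩
        have hl := label_eq hB ht' h0
        rw [if_neg hs] at hl
        rw [ha] at hl
        rwa [hl] at ht'

theorem traces_conf {M : FSM P A} {p : P} (hB : FSM.Basic M p) :
    ∀ (φ : List (Act P A)) (q : ℕ) (C : List ℕ), Chain M (q :: C) →
      ((∃ s, MSteps (FSM.toMachine M) q φ s) ↔
        ∃ T', LSteps p (Conf M C q) φ T') := by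
  intro φ
  induction φ with
  | nil => exact fun q C _ => ⟨fun _ => ⟨_, .nil⟩, fun _ => ⟨_, .nil⟩⟩
  | cons ℓ φ ih =>
    intro q C hC
    constructor
    · rintro ⟨s, hs⟩
      cases hs with
      | cons h1 h2 =>
        rcases step_forward hB hC h1 with ⟨C', hC', hst⟩
        rcases (ih _ _ hC').1 ⟨s, h2⟩ with ⟨T', hT⟩
        exact ⟨T', .cons hst hT⟩
    · rintro ⟨T', hT⟩
      cases hT with
      | cons h1 h2 =>
        rcases step_backward hB hC h1 with ⟨q', C', ht, hC', hTeq⟩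
        rw [hTeq] at h2
        rcases (ih _ _ hC').2 ⟨T', h2⟩ with ⟨s, hs⟩
        exact ⟨s, .cons ht hs⟩

theorem msteps_iff_lsteps {self : P} {T : LTn P A}
    (φ : List (Act P A)) (T0 T1 : LTn P A) :
    MSteps (AT self T) T0 φ T1 ↔ LSteps self T0 φ T1 := by
  constructor
  · intro h
    induction h with
    | nil => exact .nil
    | cons h1 _ ih => exact .cons h1 ih
  · intro h
    induction h with
    | nil => exact .nil
    | cons h1 _ ih => exact .cons h1 ih

end AuxDev3


/-- the translations between basic CFSMs and local types
preserve the trace semantics: a basic CFSM M (of participant p) is trace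
equivalent to the automaton A(T(M)) of its induced local type, and any
local type T is trace equivalent to its automaton A(T). -/
theorem translations_preserve_traces {P A : Type} (p : P) (M : FSM P A)
    (hB : FSM.Basic M p) :
    MTraces (FSM.toMachine M) = MTraces (AT p (TM M)) ∧
    (∀ (self : P) (T : LTn P A), LTraces self T = MTraces (AT self T)) := by
  have part2 : ∀ (self : P) (T : LTn P A), LTraces self T = MTraces (AT self T) := by
    intro self T
    ext φ
    constructor
    · rintro ⟨T', h⟩
      exact ⟨T', (msteps_iff_lsteps φ _ _).2 h⟩
    · rintro ⟨s, h⟩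
      exact ⟨s, (msteps_iff_lsteps φ _ _).1 h⟩
  refine ⟨?_, part2⟩
  rw [← part2 p (TM M)]
  ext φ
  have hchain : Chain M (M.init :: []) :=
    Chain.cons (init_mem_states M) (by simp) Chain.nil
  have hconf : Conf M [] M.init = TM M := rfl
  constructor
  · rintro ⟨s, h⟩
    rcases (traces_conf hB φ M.init [] hchain).1 ⟨s, h⟩ with ⟨T', hT⟩
    exact ⟨T', hconf ▸ hT⟩
  · rintro ⟨T', hT⟩
    exact (traces_conf hB φ M.init [] hchain).2 ⟨T', hconf ▸ hT⟩
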